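/- If ν is translation-invariant and ergodic, and u ∈ L²_vec(ν) satisfies the cycle condition, then the orthogonal projection P_j u of u onto the kernel of (1 - T_j) in L²_vec(ν) is ν-a.s. equal to the constant E_ν(P_j u), for each coordinate shift T_j. -/

import Mathlib

open MeasureTheory Real Filter ProbabilityTheory
open scoped ENNReal

noncomputable section

variable {d : ℕ}
/-- Positively oriented edges of `ℤ^d`: a base point together with a direction. -/
abbrev EdgeZ (d : ℕ) := ((Fin d → ℤ) × Fin d)

/-- Configurations indexed by (positively oriented) edges: gradients or conductances. -/
abbrev Cfg (d : ℕ) := EdgeZ d → ℝ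

/-- `sv j n` is `n` times the `j`-th coordinate unit vector of `ℤ^d`. -/
def sv (j : Fin d) (n : ℤ) : Fin d → ℤ := fun i => if i = j then n else 0

/-- Shift of a configuration by a lattice vector `x`. -/
def shf (x : Fin d → ℤ) (κ : Cfg d) : Cfg d := fun e => κ (e.1 + x, e.2)

/-- Translation invariance of a measure on configurations. -/
def TInv (ν : Measure (Cfg d)) : Prop := ∀ x, ν.map (shf x) = ν

/-- Ergodicity with respect to the group of lattice shifts. -/
def Erg (ν : Measure (Cfg d)) : Prop :=
  ∀ A : Set (Cfg d), MeasurableSet A → (∀ x, shf x ⁻¹' A = A) → ν A = 0 ∨ ν A = 1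

/-- Uniform ellipticity: `ε ≤ κ_b ≤ 1/ε` almost surely. -/
def Elliptic (ν : Measure (Cfg d)) : Prop :=
  ∃ ε : ℝ, 0 < ε ∧ ∀ᵐ κ ∂ν, ∀ e, ε ≤ κ e ∧ κ e ≤ 1 / ε
/-- A local function of the environment: depends on finitely many edges. -/
def IsLocal (h : Cfg d → ℝ) : Prop :=
  ∃ S : Finset (EdgeZ d), ∀ κ κ' : Cfg d, (∀ e ∈ S, κ e = κ' e) → h κ = h κ'

/-- The gradient `(∇h)_j = h ∘ τ_{ê_j} - h` of a function of the environment. -/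
def grad (h : Cfg d → ℝ) : Cfg d → Fin d → ℝ :=
  fun κ j => h (shf (sv j 1) κ) - h κ

/-- The `L²_vec(ν)` inner product `(u,v) = E_ν[Σ_b κ_b u(κ,b) v(κ,b)]`. -/
def ivec (ν : Measure (Cfg d)) (u v : Cfg d → Fin d → ℝ) : ℝ :=
  ∫ κ, ∑ j, κ (0, j) * u κ j * v κ j ∂ν

/-- Square integrability with respect to `ν`. -/
def SqInt (ν : Measure (Cfg d)) (h : Cfg d → ℝ) : Prop :=
  ∫⁻ κ, ENNReal.ofReal ((h κ) ^ 2) ∂ν < ⊤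

/-- Membership in `L²_vec(ν)`: measurable components, each square integrable. -/
def MemL2vec (ν : Measure (Cfg d)) (u : Cfg d → Fin d → ℝ) : Prop :=
  (∀ j, Measurable fun κ => u κ j) ∧ ∀ j, SqInt ν fun κ => u κ j

/-- Membership in `L²_∇(ν)`, the closure in the `L²_vec(ν)` norm of gradients of
local functions. -/
def MemGradClos (ν : Measure (Cfg d)) (u : Cfg d → Fin d → ℝ) : Prop :=
  ∀ δ : ℝ, 0 < δ → ∃ h : Cfg d → ℝ, IsLocal h ∧ Measurable h ∧
    ∫⁻ κ, ENNReal.ofReal (∑ j, κ (0, j) * (u κ j - grad h κ j) ^ 2) ∂ν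
      < ENNReal.ofReal δ

/-- The extension of a vector field to negative directions: `u(κ,-b) = -u(τ_{-b}κ, b)`.
A signed step is a pair `(j, s)` with `s = true` for `+ê_j`, `false` for `-ê_j`. -/
def uExt (u : Cfg d → Fin d → ℝ) (κ : Cfg d) (s : Fin d × Bool) : ℝ :=
  if s.2 then u κ s.1 else -u (shf (-sv s.1 1) κ) s.1

/-- The lattice displacement of a signed step. -/
def stepOf (s : Fin d × Bool) : Fin d → ℤ :=
  if s.2 then sv s.1 1 else -sv s.1 1

/-- The sum of a vector field along a nearest-neighbor path started at the origin,
written in environment coordinates. -/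
def pathSum (u : Cfg d → Fin d → ℝ) : Cfg d → List (Fin d × Bool) → ℝ
  | _, [] => 0
  | κ, s :: r => uExt u κ s + pathSum u (shf (stepOf s) κ) r

/-- The cycle condition: the sum of the field along every closed nearest-neighbor
loop vanishes. -/
def CycleCond (u : Cfg d → Fin d → ℝ) (κ : Cfg d) : Prop :=
  ∀ ℓ : List (Fin d × Bool), (ℓ.map stepOf).sum = 0 → pathSum u κ ℓ = 0

/-- The divergence `(Lu)(κ) = Σ_b [κ_b u(κ,b) - (τ_{-b}κ)_b u(τ_{-b}κ,b)]`. -/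
def divg (u : Cfg d → Fin d → ℝ) (κ : Cfg d) : ℝ :=
  ∑ j, (κ (0, j) * u κ j
    - shf (-sv j 1) κ (0, j) * u (shf (-sv j 1) κ) j)

-- basic shift algebra
lemma shf_shf (x y : Fin d → ℤ) (κ : Cfg d) : shf x (shf y κ) = shf (x + y) κ := by
  funext e; simp [shf, add_assoc]

lemma shf_zero (κ : Cfg d) : shf 0 κ = κ := by funext e; simp [shf]

lemma measurable_shf (x : Fin d → ℤ) : Measurable (shf (d := d) x) :=
  measurable_pi_lambda _ fun e => measurable_pi_apply _

lemma mp_shf {ν : Measure (Cfg d)} (hTI : TInv ν) (x : Fin d → ℤ) :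
    MeasurePreserving (shf x) ν ν := ⟨measurable_shf x, hTI x⟩

lemma integral_shf {ν : Measure (Cfg d)} (hTI : TInv ν) (x : Fin d → ℤ)
    {f : Cfg d → ℝ} (hf : AEStronglyMeasurable f ν) :
    ∫ κ, f (shf x κ) ∂ν = ∫ κ, f κ ∂ν := by
  rw [← integral_map (measurable_shf x).aemeasurable (by rwa [hTI x]), hTI x]

lemma ae_comp_shf {ν : Measure (Cfg d)} (hTI : TInv ν) (x : Fin d → ℤ)
    {g g' : Cfg d → ℝ} (h : g =ᵐ[ν] g') :
    (fun κ => g (shf x κ)) =ᵐ[ν] fun κ => g' (shf x κ) :=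
  (mp_shf hTI x).quasiMeasurePreserving.ae_eq_comp h

-- SqInt and MemLp
lemma ofReal_sq_eq (r : ℝ) : ENNReal.ofReal (r ^ 2) = ‖r ^ 2‖ₑ :=
  (Real.enorm_eq_ofReal (sq_nonneg r)).symm

lemma sqInt_iff_memLp {ν : Measure (Cfg d)} {h : Cfg d → ℝ} (hm : Measurable h) :
    SqInt ν h ↔ MemLp h 2 ν := by
  have key : SqInt ν h ↔ HasFiniteIntegral (fun κ => h κ ^ 2) ν := by
    unfold SqInt HasFiniteIntegral
    rw [lintegral_congr fun κ => ofReal_sq_eq (h κ)]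
  rw [memLp_two_iff_integrable_sq hm.aestronglyMeasurable, key]
  exact ⟨fun h2 => ⟨(hm.pow_const 2).aestronglyMeasurable, h2⟩, fun h2 => h2.2⟩

lemma memLp_comp_shf {ν : Measure (Cfg d)} (hTI : TInv ν) (x : Fin d → ℤ)
    {h : Cfg d → ℝ} (hh : MemLp h 2 ν) : MemLp (fun κ => h (shf x κ)) 2 ν := by
  have : MemLp h 2 (ν.map (shf x)) := by rwa [hTI x]
  exact this.comp_of_map (measurable_shf x).aemeasurable

lemma integrable_mul_L2 {ν : Measure (Cfg d)} {f g : Cfg d → ℝ}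
    (hf : MemLp f 2 ν) (hg : MemLp g 2 ν) :
    Integrable (fun κ => f κ * g κ) ν := by
  have hb : Integrable (fun κ => f κ ^ 2 / 2 + g κ ^ 2 / 2) ν :=
    (hf.integrable_sq.div_const 2).add (hg.integrable_sq.div_const 2)
  refine hb.mono' (hf.1.mul hg.1) (Eventually.of_forall fun κ => ?_)
  rw [Real.norm_eq_abs, abs_mul]
  nlinarith [sq_nonneg (|f κ| - |g κ|), abs_nonneg (f κ), abs_nonneg (g κ), sq_abs (f κ), sq_abs (g κ)]


lemma cycle_sq {u : Cfg d → Fin d → ℝ} {κ : Cfg d} (hc : CycleCond u κ) (i k : Fin d) :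
    u (shf (sv i 1) κ) k - u κ k = u (shf (sv k 1) κ) i - u κ i := by
  have h0 : ((List.map stepOf ((i,true) :: (k,true) :: (i,false) :: (k,false) :: ([] : List (Fin d × Bool)))).sum : Fin d → ℤ) = 0 := by
    funext m
    simp [stepOf, sv, Pi.add_apply, Pi.neg_apply]
  have h := hc _ h0
  simp only [pathSum, uExt, stepOf, if_true, if_false, shf_shf, Bool.false_eq_true,
    add_zero, if_neg Bool.false_ne_true] at h
  have e1 : -sv i 1 + (sv k 1 + sv i 1) = sv k 1 := by abel
  have e2 : -sv k 1 + sv k 1 = (0 : Fin d → ℤ) := by abel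
  rw [e1, e2, shf_zero] at h
  linarith [h]


lemma gen_invariant (ν : Measure (Cfg d)) [IsProbabilityMeasure ν]
    (hTI : TInv ν)
    (u : Cfg d → Fin d → ℝ) (hu : MemL2vec ν u)
    (hcycle : ∀ᵐ κ ∂ν, CycleCond u κ)
    (j : Fin d) (p : Cfg d → ℝ) (hpm : Measurable p) (hp2 : SqInt ν p)
    (hpinv : ∀ᵐ κ ∂ν, p (shf (sv j 1) κ) = p κ)
    (hproj : ∀ q : Cfg d → ℝ, Measurable q → SqInt ν q →
        (∀ᵐ κ ∂ν, q (shf (sv j 1) κ) = q κ) →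
        ∫ κ, (u κ j - p κ) * q κ ∂ν = 0)
    (i : Fin d) :
    (fun κ => p (shf (sv i 1) κ)) =ᵐ[ν] p := by
  have hpL : MemLp p 2 ν := (sqInt_iff_memLp hpm).1 hp2
  have hujm : Measurable fun κ => u κ j := hu.1 j
  have hujL : MemLp (fun κ => u κ j) 2 ν := (sqInt_iff_memLp hujm).1 (hu.2 j)
  have huim : Measurable fun κ => u κ i := hu.1 i
  have huiL : MemLp (fun κ => u κ i) 2 ν := (sqInt_iff_memLp huim).1 (hu.2 i)
  have hMτi_p : MemLp (fun κ => p (shf (sv i 1) κ)) 2 ν := memLp_comp_shf hTI _ hpL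
  have claim : ∀ q : Cfg d → ℝ, Measurable q → MemLp q 2 ν →
      (∀ᵐ κ ∂ν, q (shf (sv j 1) κ) = q κ) →
      ∫ κ, (p (shf (sv i 1) κ) - p κ) * q κ ∂ν = 0 := by
    intro q hqm hqL hqinv
    set q' : Cfg d → ℝ := fun κ => q (shf (-sv i 1) κ) with hq'def
    have hq'm : Measurable q' := hqm.comp (measurable_shf _)
    have hq'L : MemLp q' 2 ν := memLp_comp_shf hTI _ hqL
    have hq'inv : ∀ᵐ κ ∂ν, q' (shf (sv j 1) κ) = q' κ := by
      have h7 := ae_comp_shf hTI (-sv i 1) (g := fun κ => q (shf (sv j 1) κ)) (g' := q) hqinv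
      filter_upwards [h7] with κ hκ
      show q (shf (-sv i 1) (shf (sv j 1) κ)) = q (shf (-sv i 1) κ)
      have hxy : shf (-sv i 1) (shf (sv j 1) κ) = shf (sv j 1) (shf (-sv i 1) κ) := by
        rw [shf_shf, shf_shf, add_comm]
      rw [hxy]; exact hκ
    have h1 : ∫ κ, (u κ j - p κ) * q' κ ∂ν = 0 :=
      hproj q' hq'm ((sqInt_iff_memLp hq'm).2 hq'L) hq'inv
    have hF : AEStronglyMeasurable (fun κ => (u κ j - p κ) * q' κ) ν :=
      ((hujm.sub hpm).mul hq'm).aestronglyMeasurable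
    have h2 : ∫ κ, (u (shf (sv i 1) κ) j - p (shf (sv i 1) κ)) * q κ ∂ν = 0 := by
      have h2' := integral_shf hTI (sv i 1) hF
      rw [h1] at h2'
      rw [← h2']
      apply integral_congr_ae
      apply Eventually.of_forall
      intro κ
      simp only [hq'def, shf_shf, neg_add_cancel, shf_zero]
    have hcyc' : ∀ᵐ κ ∂ν, u (shf (sv i 1) κ) j = u κ j + (u (shf (sv j 1) κ) i - u κ i) := by
      filter_upwards [hcycle] with κ hκ
      have := cycle_sq hκ i j
      linarith
    have hMτj : MemLp (fun κ => u (shf (sv j 1) κ) i) 2 ν := memLp_comp_shf hTI _ huiL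
    have hMτi_uj : MemLp (fun κ => u (shf (sv i 1) κ) j) 2 ν := memLp_comp_shf hTI _ hujL
    have h4 : ∫ κ, u (shf (sv j 1) κ) i * q κ ∂ν = ∫ κ, u κ i * q κ ∂ν := by
      have hae : (fun κ => u (shf (sv j 1) κ) i * q κ) =ᵐ[ν]
          (fun κ => u (shf (sv j 1) κ) i * q (shf (sv j 1) κ)) := by
        filter_upwards [hqinv] with κ hκ
        rw [hκ]
      rw [integral_congr_ae hae]
      exact integral_shf hTI (sv j 1) (f := fun κ => u κ i * q κ)
        ((huim.mul hqm).aestronglyMeasurable)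
    have h3 : ∫ κ, u (shf (sv i 1) κ) j * q κ ∂ν = ∫ κ, u κ j * q κ ∂ν := by
      have hae : (fun κ => u (shf (sv i 1) κ) j * q κ) =ᵐ[ν]
          (fun κ => u κ j * q κ + (u (shf (sv j 1) κ) i * q κ - u κ i * q κ)) := by
        filter_upwards [hcyc'] with κ hκ
        rw [hκ]; ring
      have hg : Integrable (fun κ => u (shf (sv j 1) κ) i * q κ - u κ i * q κ) ν := by
        exact (integrable_mul_L2 hMτj hqL).sub (integrable_mul_L2 huiL hqL)
      rw [integral_congr_ae hae]
      rw [integral_add (integrable_mul_L2 hujL hqL) hg]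
      rw [integral_sub (integrable_mul_L2 hMτj hqL) (integrable_mul_L2 huiL hqL), h4]
      ring
    have h5 : ∫ κ, u κ j * q κ ∂ν = ∫ κ, p κ * q κ ∂ν := by
      have h5' := hproj q hqm ((sqInt_iff_memLp hqm).2 hqL) hqinv
      have hsplit : ∫ κ, (u κ j - p κ) * q κ ∂ν
          = ∫ κ, u κ j * q κ ∂ν - ∫ κ, p κ * q κ ∂ν := by
        rw [← integral_sub (integrable_mul_L2 hujL hqL) (integrable_mul_L2 hpL hqL)]
        apply integral_congr_ae
        apply Eventually.of_forall
        intro κ; ring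
      rw [hsplit] at h5'; linarith
    have h6 : ∫ κ, p (shf (sv i 1) κ) * q κ ∂ν = ∫ κ, u (shf (sv i 1) κ) j * q κ ∂ν := by
      have hsplit : ∫ κ, (u (shf (sv i 1) κ) j - p (shf (sv i 1) κ)) * q κ ∂ν
          = ∫ κ, u (shf (sv i 1) κ) j * q κ ∂ν - ∫ κ, p (shf (sv i 1) κ) * q κ ∂ν := by
        rw [← integral_sub (integrable_mul_L2 hMτi_uj hqL) (integrable_mul_L2 hMτi_p hqL)]
        apply integral_congr_ae
        apply Eventually.of_forall
        intro κ; ring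
      rw [hsplit] at h2; linarith
    have hsplit2 : ∫ κ, (p (shf (sv i 1) κ) - p κ) * q κ ∂ν
        = ∫ κ, p (shf (sv i 1) κ) * q κ ∂ν - ∫ κ, p κ * q κ ∂ν := by
      rw [← integral_sub (integrable_mul_L2 hMτi_p hqL) (integrable_mul_L2 hpL hqL)]
      apply integral_congr_ae
      apply Eventually.of_forall
      intro κ; ring
    rw [hsplit2, h6, h3, h5]; ring
  set q0 : Cfg d → ℝ := fun κ => p (shf (sv i 1) κ) - p κ with hq0
  have hq0m : Measurable q0 := (hpm.comp (measurable_shf _)).sub hpm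
  have hq0L : MemLp q0 2 ν := hMτi_p.sub hpL
  have hq0inv : ∀ᵐ κ ∂ν, q0 (shf (sv j 1) κ) = q0 κ := by
    have h7 := ae_comp_shf hTI (sv i 1) (g := fun κ => p (shf (sv j 1) κ)) (g' := p) hpinv
    filter_upwards [hpinv, h7] with κ h1 h2
    show p (shf (sv i 1) (shf (sv j 1) κ)) - p (shf (sv j 1) κ)
        = p (shf (sv i 1) κ) - p κ
    have hxy : shf (sv i 1) (shf (sv j 1) κ) = shf (sv j 1) (shf (sv i 1) κ) := by
      rw [shf_shf, shf_shf, add_comm]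
    rw [hxy, h1, h2]
  have hzero := claim q0 hq0m hq0L hq0inv
  have hnn : 0 ≤ᵐ[ν] fun κ => q0 κ * q0 κ :=
    Eventually.of_forall fun κ => mul_self_nonneg _
  have hint : Integrable (fun κ => q0 κ * q0 κ) ν := integrable_mul_L2 hq0L hq0L
  have hae0 := (integral_eq_zero_iff_of_nonneg_ae hnn hint).1 hzero
  filter_upwards [hae0] with κ hκ
  have h8 : q0 κ * q0 κ = 0 := hκ
  have h9 := mul_self_eq_zero.1 h8
  simpa [hq0, sub_eq_zero] using h9


lemma shf_invariant_all (ν : Measure (Cfg d)) (hTI : TInv ν) (p : Cfg d → ℝ)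
    (hgen : ∀ i : Fin d, (fun κ => p (shf (sv i 1) κ)) =ᵐ[ν] p) :
    ∀ x : Fin d → ℤ, (fun κ => p (shf x κ)) =ᵐ[ν] p := by
  classical
  have hzero : (fun κ => p (shf (0 : Fin d → ℤ) κ)) =ᵐ[ν] p :=
    Eventually.of_forall fun κ => by show p (shf 0 κ) = p κ; rw [shf_zero]
  have hadd : ∀ x y : Fin d → ℤ, (fun κ => p (shf x κ)) =ᵐ[ν] p →
      (fun κ => p (shf y κ)) =ᵐ[ν] p → (fun κ => p (shf (x + y) κ)) =ᵐ[ν] p := by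
    intro x y hx hy
    have h1 := ae_comp_shf hTI y (g := fun κ => p (shf x κ)) (g' := p) hx
    filter_upwards [h1, hy] with κ a b
    show p (shf (x + y) κ) = p κ
    rw [← shf_shf]
    exact a.trans b
  have hneg : ∀ x : Fin d → ℤ, (fun κ => p (shf x κ)) =ᵐ[ν] p →
      (fun κ => p (shf (-x) κ)) =ᵐ[ν] p := by
    intro x hx
    have h1 := ae_comp_shf hTI (-x) (g := fun κ => p (shf x κ)) (g' := p) hx
    filter_upwards [h1] with κ a
    have hxx : shf x (shf (-x) κ) = κ := by rw [shf_shf, add_neg_cancel, shf_zero]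
    show p (shf (-x) κ) = p κ
    have a' : p (shf x (shf (-x) κ)) = p (shf (-x) κ) := a
    rw [hxx] at a'
    exact a'.symm
  have hone : ∀ (i : Fin d) (n : ℤ), (fun κ => p (shf (sv i n) κ)) =ᵐ[ν] p := by
    intro i n
    induction n using Int.induction_on with
    | zero =>
      have : sv i (0 : ℤ) = (0 : Fin d → ℤ) := by funext m; simp [sv]
      rw [this]; exact hzero
    | succ n ih =>
      have : sv i ((n : ℤ) + 1) = sv i n + sv i 1 := by
        funext m; by_cases h : m = i <;> simp [sv, h]
      rw [this]; exact hadd _ _ ih (hgen i)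
    | pred n ih =>
      have : sv i (-(n : ℤ) - 1) = sv i (-n) + -(sv i 1) := by
        funext m; by_cases h : m = i <;> simp [sv, h] <;> ring
      rw [this]; exact hadd _ _ ih (hneg _ (hgen i))
  intro x
  have hx : x = ∑ i, sv i (x i) := by
    funext m
    rw [Finset.sum_apply]
    simp [sv]
  rw [hx]
  exact Finset.sum_induction _ (fun v => (fun κ => p (shf v κ)) =ᵐ[ν] p)
    (fun a b ha hb => hadd a b ha hb) hzero (fun i _ => hone i (x i))

/-- Lemma on projections onto shift-invariant functions.
Let `ν` be translation-invariant and ergodic, and let `u ∈ L²_vec(ν)` satisfy the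
cycle condition.  If `p` is the orthogonal projection of the component `u_j` onto
`Ker(1 - T_j)` in `L²(ν)` (i.e. `p` is `T_j`-invariant, square integrable, and
`u_j - p` is orthogonal to every `T_j`-invariant square-integrable function), then
`p` is `ν`-a.s. equal to the constant `E_ν(p)`. -/
theorem projection_onto_shift_invariant_is_constant
    (ν : Measure (Cfg d)) [IsProbabilityMeasure ν]
    (hTI : TInv ν) (hErg : Erg ν) (hEll : Elliptic ν)
    (u : Cfg d → Fin d → ℝ) (hu : MemL2vec ν u)
    (hcycle : ∀ᵐ κ ∂ν, CycleCond u κ)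
    (j : Fin d) (p : Cfg d → ℝ) (hpm : Measurable p) (hp2 : SqInt ν p)
    (hpinv : ∀ᵐ κ ∂ν, p (shf (sv j 1) κ) = p κ)
    (hproj : ∀ q : Cfg d → ℝ, Measurable q → SqInt ν q →
        (∀ᵐ κ ∂ν, q (shf (sv j 1) κ) = q κ) →
        ∫ κ, (u κ j - p κ) * q κ ∂ν = 0) :
    ∀ᵐ κ ∂ν, p κ = ∫ κ', p κ' ∂ν := by
  classical
  have hgen : ∀ i : Fin d, (fun κ => p (shf (sv i 1) κ)) =ᵐ[ν] p := fun i =>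
    gen_invariant ν hTI u hu hcycle j p hpm hp2 hpinv hproj i
  have hall : ∀ x : Fin d → ℤ, (fun κ => p (shf x κ)) =ᵐ[ν] p :=
    shf_invariant_all ν hTI p hgen
  -- an exactly shift-invariant modification of p
  set N₀ : Set (Cfg d) := ⋃ x : Fin d → ℤ, {κ | ¬ p (shf x κ) = p κ} with hN₀def
  have hN₀meas : MeasurableSet N₀ :=
    MeasurableSet.iUnion fun x =>
      (measurableSet_eq_fun (hpm.comp (measurable_shf x)) hpm).compl
  have hN₀null : ν N₀ = 0 :=
    measure_iUnion_null fun x => ae_iff.1 (hall x)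
  set N : Set (Cfg d) := ⋃ x : Fin d → ℤ, shf x ⁻¹' N₀ with hNdef
  have hNmeas : MeasurableSet N :=
    MeasurableSet.iUnion fun x => (measurable_shf x) hN₀meas
  have hNnull : ν N = 0 :=
    measure_iUnion_null fun x =>
      (mp_shf hTI x).quasiMeasurePreserving.preimage_null hN₀null
  have hNinv : ∀ y, shf y ⁻¹' N = N := by
    intro y
    ext κ
    simp only [hNdef, Set.mem_iUnion, Set.mem_preimage]
    constructor
    · rintro ⟨x, hx⟩
      refine ⟨x + y, ?_⟩
      rwa [← shf_shf]
    · rintro ⟨x, hx⟩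
      refine ⟨x - y, ?_⟩
      rw [shf_shf, sub_add_cancel]
      exact hx
  set g : Cfg d → ℝ := fun κ => if κ ∈ N then 0 else p κ with hgdef
  have hgmeas : Measurable g := Measurable.ite hNmeas measurable_const hpm
  have hginv : ∀ y κ, g (shf y κ) = g κ := by
    intro y κ
    have hmem : shf y κ ∈ N ↔ κ ∈ N := by
      constructor
      · intro h; rw [← hNinv y]; exact h
      · intro h; rw [← hNinv y] at h; exact h
    by_cases h : κ ∈ N
    · simp only [hgdef, if_pos h, if_pos (hmem.2 h)]
    · have h2 : shf y κ ∉ N := fun hc => h (hmem.1 hc)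
      simp only [hgdef, if_neg h, if_neg h2]
      have h3 : κ ∉ N₀ := fun hc =>
        h (Set.mem_iUnion.2 ⟨0, by rwa [Set.mem_preimage, shf_zero]⟩)
      simp only [hN₀def, Set.mem_iUnion, Set.mem_setOf_eq, not_exists, not_not] at h3
      exact h3 y
  have hgae : g =ᵐ[ν] p := by
    have hN' : ∀ᵐ κ ∂ν, κ ∉ N := by
      rw [ae_iff]
      simpa using hNnull
    filter_upwards [hN'] with κ h
    simp [hgdef, h]
  -- level sets of g are exactly invariant, hence have trivial measure
  have hlevel : ∀ c : ℝ, ν {κ | g κ ≤ c} = 0 ∨ ν {κ | g κ ≤ c} = 1 := by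
    intro c
    refine hErg _ (measurableSet_le hgmeas measurable_const) ?_
    intro x
    ext κ
    simp only [Set.mem_preimage, Set.mem_setOf_eq, hginv x κ]
  set S : Set ℝ := {c | ν {κ | g κ ≤ c} = 1} with hSdef
  have hmono : ∀ c c' : ℝ, c ≤ c' → c ∈ S → c' ∈ S := by
    intro c c' hcc hc
    have hsub : {κ | g κ ≤ c} ⊆ {κ | g κ ≤ c'} := fun κ h => le_trans h hcc
    have h1 : (1 : ℝ≥0∞) ≤ ν {κ | g κ ≤ c'} := hc ▸ measure_mono hsub
    exact le_antisymm (prob_le_one) h1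
  have hSne : S.Nonempty := by
    by_contra h
    rw [Set.not_nonempty_iff_eq_empty] at h
    have h0 : ∀ n : ℕ, ν {κ | g κ ≤ (n : ℝ)} = 0 := by
      intro n
      rcases hlevel (n : ℝ) with h1 | h1
      · exact h1
      · exfalso
        have hmem : (n : ℝ) ∈ S := h1
        rw [h] at hmem
        exact hmem
    have huniv : (⋃ n : ℕ, {κ | g κ ≤ (n : ℝ)}) = Set.univ := by
      ext κ
      simp only [Set.mem_iUnion, Set.mem_setOf_eq, Set.mem_univ, iff_true]
      exact exists_nat_ge (g κ)
    have := measure_iUnion_null h0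
    rw [huniv] at this
    simp at this
  have hbdd : BddBelow S := by
    have hex : ∃ n : ℕ, ν {κ | g κ ≤ -(n : ℝ)} = 0 := by
      by_contra h
      push_neg at h
      have h1 : ∀ n : ℕ, ν {κ | g κ ≤ -(n : ℝ)}ᶜ = 0 := by
        intro n
        rcases hlevel (-(n : ℝ)) with h2 | h2
        · exact absurd h2 (h n)
        · exact (prob_compl_eq_zero_iff (measurableSet_le hgmeas measurable_const)).2 h2
      have h2 : ν (⋃ n : ℕ, {κ | g κ ≤ -(n : ℝ)}ᶜ) = 0 := measure_iUnion_null h1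
      have h3 : (⋃ n : ℕ, {κ | g κ ≤ -(n : ℝ)}ᶜ) = Set.univ := by
        ext κ
        simp only [Set.mem_iUnion, Set.mem_compl_iff, Set.mem_setOf_eq, Set.mem_univ, iff_true]
        obtain ⟨n, hn⟩ := exists_nat_gt (-g κ)
        exact ⟨n, by push_neg; linarith⟩
      rw [h3] at h2
      simp at h2
    obtain ⟨n, hn⟩ := hex
    refine ⟨-(n : ℝ), fun c hc => ?_⟩
    by_contra hlt
    push_neg at hlt
    have hsub : {κ | g κ ≤ c} ⊆ {κ | g κ ≤ -(n : ℝ)} := fun κ h => le_trans h hlt.le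
    have := measure_mono (μ := ν) hsub
    rw [hc, hn] at this
    simp at this
  set c₀ : ℝ := sInf S with hc₀
  have habove : ∀ c : ℝ, c₀ < c → ν {κ | g κ ≤ c} = 1 := by
    intro c hc
    obtain ⟨a, haS, hac⟩ := exists_lt_of_csInf_lt hSne hc
    exact hmono a c hac.le haS
  have hbelow : ∀ c : ℝ, c < c₀ → ν {κ | g κ ≤ c} = 0 := by
    intro c hc
    rcases hlevel c with h | h
    · exact h
    · exact absurd (csInf_le hbdd h) (not_le.2 hc)
  have hle : ∀ᵐ κ ∂ν, g κ ≤ c₀ := by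
    have hsub : {κ | ¬ g κ ≤ c₀} ⊆ ⋃ n : ℕ, {κ | g κ ≤ c₀ + 1 / ((n : ℝ) + 1)}ᶜ := by
      intro κ hκ
      simp only [Set.mem_setOf_eq, not_le] at hκ
      obtain ⟨n, hn⟩ := exists_nat_one_div_lt (sub_pos.2 hκ)
      refine Set.mem_iUnion.2 ⟨n, ?_⟩
      simp only [Set.mem_compl_iff, Set.mem_setOf_eq, not_le]
      linarith
    rw [ae_iff]
    refine measure_mono_null hsub (measure_iUnion_null fun n => ?_)
    refine (prob_compl_eq_zero_iff (measurableSet_le hgmeas measurable_const)).2 ?_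
    refine habove _ ?_
    have : 0 < 1 / ((n : ℝ) + 1) := by positivity
    linarith
  have hge : ∀ᵐ κ ∂ν, c₀ ≤ g κ := by
    have hsub : {κ | ¬ c₀ ≤ g κ} ⊆ ⋃ n : ℕ, {κ | g κ ≤ c₀ - 1 / ((n : ℝ) + 1)} := by
      intro κ hκ
      simp only [Set.mem_setOf_eq, not_le] at hκ
      obtain ⟨n, hn⟩ := exists_nat_one_div_lt (sub_pos.2 hκ)
      refine Set.mem_iUnion.2 ⟨n, ?_⟩
      simp only [Set.mem_setOf_eq]
      linarith
    rw [ae_iff]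
    refine measure_mono_null hsub (measure_iUnion_null fun n => ?_)
    refine hbelow _ ?_
    have : 0 < 1 / ((n : ℝ) + 1) := by positivity
    linarith
  have hgc : g =ᵐ[ν] fun _ => c₀ := by
    filter_upwards [hle, hge] with κ h1 h2
    exact le_antisymm h1 h2
  have hpc : p =ᵐ[ν] fun _ => c₀ := hgae.symm.trans hgc
  have hint : ∫ κ', p κ' ∂ν = c₀ := by
    rw [integral_congr_ae hpc]
    simp
  rw [hint]
  exact hpc
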